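/- Let k be a field, and let V be a finite-dimensional k-vector space with a linear form f: V → k. In the Grothendieck ring of varieties with exponentials over k, the class [V, f] equals 𝕃^{dim V} if f = 0, and equals 0 otherwise. -/

import Mathlib

open scoped Classical

noncomputable section

/- The Grothendieck ring of varieties with exponentials `K₀(ExpVar_k)` is encoded through its
universal property: a "motivic measure with exponentials" assigns elements of a commutative
ring `R` to pairs `(S, p)` of a constructible subset `S` of affine space over `k` together
with a regular function `p` on it, subject to the generating relations of `K₀(ExpVar_k)`:
isomorphism invariance, scissor relations, multiplicativity, normalization on a point, and
the relation `[X × 𝔸¹, pr₂] = 0`. -/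

variable (k : Type*) [Field k]

/-- Points of affine `m`-space over `k`. -/
abbrev PtK (m : ℕ) := Fin m → k

/-- Zariski-closed subsets. -/
def IsZClosed {m : ℕ} (Z : Set (PtK k m)) : Prop :=
  ∃ I : Set (MvPolynomial (Fin m) k), Z = {x | ∀ p ∈ I, MvPolynomial.eval x p = 0}

/-- Constructible subsets: finite unions of locally closed subsets. -/
def IsZConstructible {m : ℕ} (S : Set (PtK k m)) : Prop :=
  ∃ (N : ℕ) (C D : Fin N → Set (PtK k m)),
    (∀ i, IsZClosed k (C i)) ∧ (∀ i, IsZClosed k (D i)) ∧ S = ⋃ i, C i \ D i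

/-- Polynomial maps between affine spaces. -/
def IsPolyMap {m l : ℕ} (φ : PtK k m → PtK k l) : Prop :=
  ∃ P : Fin l → MvPolynomial (Fin m) k, ∀ x j, φ x j = MvPolynomial.eval x (P j)

/-- A motivic measure on varieties with exponentials, with values in `R`. -/
structure ExpMotivicMeasure (R : Type*) [CommRing R] where
  meas : ∀ m : ℕ, Set (PtK k m) → MvPolynomial (Fin m) k → R
  meas_empty : ∀ (m : ℕ) (p : MvPolynomial (Fin m) k), meas m ∅ p = 0
  meas_point : meas 0 Set.univ 0 = 1
  meas_add : ∀ (m : ℕ) (S Z : Set (PtK k m)) (p : MvPolynomial (Fin m) k),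
    IsZConstructible k S → IsZClosed k Z →
    meas m S p = meas m (S ∩ Z) p + meas m (S \ Z) p
  meas_iso : ∀ (m l : ℕ) (S : Set (PtK k m)) (T : Set (PtK k l))
    (φ : PtK k m → PtK k l) (ψ : PtK k l → PtK k m)
    (p : MvPolynomial (Fin m) k) (q : MvPolynomial (Fin l) k),
    IsZConstructible k S → IsZConstructible k T → IsPolyMap k φ → IsPolyMap k ψ →
    Set.MapsTo φ S T → Set.MapsTo ψ T S →
    (∀ x ∈ S, ψ (φ x) = x) → (∀ y ∈ T, φ (ψ y) = y) →
    (∀ x ∈ S, MvPolynomial.eval x p = MvPolynomial.eval (φ x) q) →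
    meas m S p = meas l T q
  meas_prod : ∀ (m l : ℕ) (S : Set (PtK k m)) (T : Set (PtK k l))
    (p : MvPolynomial (Fin m) k) (q : MvPolynomial (Fin l) k),
    IsZConstructible k S → IsZConstructible k T →
    meas (m + l) {x | (fun i => x (Fin.castAdd l i)) ∈ S ∧ (fun j => x (Fin.natAdd m j)) ∈ T}
      (MvPolynomial.rename (Fin.castAdd l) p + MvPolynomial.rename (Fin.natAdd m) q)
      = meas m S p * meas l T q
  meas_cyl : ∀ (m : ℕ) (S : Set (PtK k m)), IsZConstructible k S →
    meas (m + 1) {x | (fun i : Fin m => x i.castSucc) ∈ S} (MvPolynomial.X (Fin.last m)) = 0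

/-- The Lefschetz class `𝕃 = [𝔸¹, 0]`. -/
def ExpMotivicMeasure.lef {R : Type*} [CommRing R] (μ : ExpMotivicMeasure k R) : R :=
  μ.meas 1 Set.univ 0

lemma univ_zconstructible (m : ℕ) : IsZConstructible k (Set.univ : Set (PtK k m)) := by
  refine ⟨1, fun _ => Set.univ, fun _ => ∅, fun _ => ⟨∅, by simp⟩,
    fun _ => ⟨{1}, ?_⟩, by simp [Set.iUnion_const]⟩
  ext x; simp

lemma meas_univ_zero (R : Type*) [CommRing R] (μ : ExpMotivicMeasure k R) (m : ℕ) :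
    μ.meas m Set.univ 0 = μ.lef k ^ m := by
  induction m with
  | zero => simpa using μ.meas_point
  | succ n ih =>
      have h := μ.meas_prod n 1 Set.univ Set.univ 0 0
        (univ_zconstructible k n) (univ_zconstructible k 1)
      simp only [Set.mem_univ, and_self, Set.setOf_true, map_zero, add_zero] at h
      rw [h, ih, ExpMotivicMeasure.lef, pow_succ]

theorem class_of_linear_form (R : Type*) [CommRing R] (μ : ExpMotivicMeasure k R)
    (m : ℕ) (l : Fin m → k) :
    μ.meas m Set.univ (∑ i, MvPolynomial.C (l i) * MvPolynomial.X i)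
      = if l = 0 then μ.lef k ^ m else 0 := by
  by_cases hl : l = 0
  · subst hl
    simp [meas_univ_zero]
  · simp only [hl, if_false]
    obtain ⟨i₀, hi₀⟩ : ∃ i, l i ≠ 0 := by
      by_contra h; push_neg at h; exact hl (funext h)
    obtain ⟨n, rfl⟩ : ∃ n, m = n + 1 := by
      cases m with
      | zero => exact absurd i₀.2 (by omega)
      | succ n => exact ⟨n, rfl⟩
    set e : Fin (n + 1) := Fin.last n with he
    set σ : Equiv.Perm (Fin (n + 1)) := Equiv.swap i₀ e with hσ
    set c : k := l i₀ with hc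
    set φ : PtK k (n + 1) → PtK k (n + 1) :=
      fun x j => if j = e then ∑ i, l i * x i else x (σ j) with hφ
    set ψ : PtK k (n + 1) → PtK k (n + 1) :=
      fun y j => if j = i₀ then c⁻¹ * ((1 + c) * y e - ∑ i, l (σ i) * y i) else y (σ j) with hψ
    have hσe : σ e = i₀ := by simp [hσ, Equiv.swap_apply_right]
    have hσi₀ : σ i₀ = e := by simp [hσ, Equiv.swap_apply_left]
    have hσσ : ∀ j, σ (σ j) = j := fun j => Equiv.swap_apply_self _ _ j
    -- ψ ∘ φ = id
    have key1 : ∀ x : PtK k (n + 1), ψ (φ x) = x := by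
      intro x
      funext j
      rcases eq_or_ne j i₀ with hj | hj
      · rw [hj]
        have hterm : ∀ i, l (σ i) * (φ x i) =
            l (σ i) * x (σ i) + (if i = e then c * (∑ i, l i * x i) - c * x i₀ else 0) := by
          intro i
          rcases eq_or_ne i e with hi | hi
          · rw [hi]
            simp only [hφ, if_pos rfl, hσe, ← hc]
            rw [if_pos trivial]; ring
          · simp only [hφ, if_neg hi, add_zero]
        have hsum : ∑ i, l (σ i) * (φ x i) =
            (1 + c) * (∑ i, l i * x i) - c * x i₀ := by
          rw [Finset.sum_congr rfl (fun i _ => hterm i), Finset.sum_add_distrib,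
            Finset.sum_ite_eq' Finset.univ e
              (fun _ => c * (∑ i, l i * x i) - c * x i₀),
            if_pos (Finset.mem_univ e), Equiv.sum_comp σ (fun i => l i * x i)]
          ring
        simp only [hψ, if_pos rfl, hsum]
        have hφe : φ x e = ∑ i, l i * x i := by simp [hφ]
        rw [hφe]
        field_simp
        ring
      · simp only [hψ, if_neg hj]
        have hne : σ j ≠ e := fun h => hj (by rw [← hσσ j, h, hσe])
        simp only [hφ, if_neg hne, hσσ]
    -- φ ∘ ψ = id
    have key2 : ∀ y : PtK k (n + 1), φ (ψ y) = y := by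
      intro y
      funext j
      rcases eq_or_ne j e with hj | hj
      · rw [hj]
        have hterm : ∀ i, l i * (ψ y i) =
            l i * y (σ i) + (if i = i₀ then
              c * (c⁻¹ * ((1 + c) * y e - ∑ i, l (σ i) * y i)) - c * y e else 0) := by
          intro i
          rcases eq_or_ne i i₀ with hi | hi
          · rw [hi]
            simp only [hψ, if_pos rfl, hσi₀, ← hc]
            rw [if_pos trivial]; ring
          · simp only [hψ, if_neg hi, add_zero]
        have hre : ∑ i, l i * y (σ i) = ∑ i, l (σ i) * y i := by
          have := Equiv.sum_comp σ (fun i => l i * y (σ i))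
          simp only [hσσ] at this
          exact this.symm
        have hcc : c * (c⁻¹ * ((1 + c) * y e - ∑ i, l (σ i) * y i)) =
            (1 + c) * y e - ∑ i, l (σ i) * y i := by
          rw [← mul_assoc, mul_inv_cancel₀ hi₀, one_mul]
        simp only [hφ, if_pos rfl]
        rw [Finset.sum_congr rfl (fun i _ => hterm i), Finset.sum_add_distrib,
          Finset.sum_ite_eq' Finset.univ i₀ _, if_pos (Finset.mem_univ i₀), hre, hcc]
        ring
      · have hne : σ j ≠ i₀ := fun h => hj (by rw [← hσσ j, h, hσi₀])
        simp only [hφ, if_neg hj, hψ, if_neg hne, hσσ]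
    -- polynomial certificates
    have hpφ : IsPolyMap k φ := by
      refine ⟨fun j => if j = e then ∑ i, MvPolynomial.C (l i) * MvPolynomial.X i
        else MvPolynomial.X (σ j), fun x j => ?_⟩
      rcases eq_or_ne j e with hj | hj
      · simp [hφ, hj, MvPolynomial.eval_sum]
      · simp [hφ, hj]
    have hpψ : IsPolyMap k ψ := by
      refine ⟨fun j => if j = i₀ then MvPolynomial.C c⁻¹ *
          (MvPolynomial.C (1 + c) * MvPolynomial.X e -
            ∑ i, MvPolynomial.C (l (σ i)) * MvPolynomial.X i)
        else MvPolynomial.X (σ j), fun y j => ?_⟩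
      rcases eq_or_ne j i₀ with hj | hj
      · simp [hψ, hj, MvPolynomial.eval_sum]
      · simp [hψ, hj]
    have hiso := μ.meas_iso (n + 1) (n + 1) Set.univ Set.univ φ ψ
      (∑ i, MvPolynomial.C (l i) * MvPolynomial.X i) (MvPolynomial.X e)
      (univ_zconstructible k (n + 1)) (univ_zconstructible k (n + 1)) hpφ hpψ
      (Set.mapsTo_univ _ _) (Set.mapsTo_univ _ _)
      (fun x _ => key1 x) (fun y _ => key2 y)
      (by
        intro x _
        simp [hφ, MvPolynomial.eval_sum])
    rw [hiso]
    have hcyl := μ.meas_cyl n Set.univ (univ_zconstructible k n)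
    simpa using hcyl


end
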